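/- A complete simple game with t = 2 equivalence classes, no nulls, no vetoers, and unique shift-minimal winning type (m_1, m_2) with 2 ≤ m_2 ≤ n_2 - 2 is not 2-invariant trade robust: the types (m_1 - 1, m_2 + 2) and (m_1 + 1, m_2 - 2) are losing and sum to twice (m_1, m_2). -/
import Mathlib


/-- A complete simple game with `t = 2` classes, no nulls, no vetoers, and unique
shift-minimal winning type `(m1, m2)` with `2 ≤ m2 ≤ n2 - 2` is not `2`-invariant
trade robust. -/
theorem stmt12 (n1 n2 m1 m2 : ℕ) (h1 : 1 ≤ m1) (h2 : m1 ≤ n1 - 1)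
    (h3 : 2 ≤ m2) (h4 : m2 ≤ n2 - 2) :
    let Win : ℕ → ℕ → Prop := fun x y => m1 ≤ x ∧ m1 + m2 ≤ x + y
    (m1 - 1 ≤ n1 ∧ m2 + 2 ≤ n2 ∧ m1 + 1 ≤ n1 ∧ m2 - 2 ≤ n2) ∧
      ¬ Win (m1 - 1) (m2 + 2) ∧ ¬ Win (m1 + 1) (m2 - 2) ∧
      (m1 - 1) + (m1 + 1) = 2 * m1 ∧ (m2 + 2) + (m2 - 2) = 2 * m2 := by
  intro Win
  refine ⟨⟨?_, ?_, ?_, ?_⟩, ?_, ?_, ?_, ?_⟩ <;> (try simp only [Win, not_and, not_le]) <;> omega
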